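/- Let k be an algebraically closed field of characteristic p, let u be a positive integer prime to p, ν ≥ 0, and set M = u(p^{ν+1}−1). For any integer q, Σ_{x ∈ μ_M} (−Tr_{F_{p^{ν+1}}/F_p}(x^{−u})) · x^q equals u if q ≡ u p^i (mod M) for some 0 ≤ i ≤ ν, and equals 0 otherwise (the sum is computed in k). -/

import Mathlib

open scoped Classical

open Finset Polynomial in
private lemma orth_sum {k : Type*} [Field k] {M : ℕ} (hM : 0 < M) {ζ : k}
    (hζ : IsPrimitiveRoot ζ M) (j : ℤ) :
    ∑ x ∈ Polynomial.nthRootsFinset M (1 : k), x ^ j = if (M : ℤ) ∣ j then (M : k) else 0 := by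
  classical
  have himg : Polynomial.nthRootsFinset M (1 : k) = (Finset.range M).image (ζ ^ ·) := by
    rw [Polynomial.nthRootsFinset_def]
    have h := hζ.nthRoots_eq (α := (1 : k)) (one_pow M)
    simp only [mul_one] at h
    rw [h]
    ext x
    simp [Finset.mem_image, Multiset.mem_map]
  rw [himg, Finset.sum_image (fun a ha b hb hab =>
    hζ.pow_inj (Finset.mem_range.mp ha) (Finset.mem_range.mp hb) hab)]
  have hz : ∀ t : ℕ, ((ζ ^ t : k)) ^ j = (ζ ^ j) ^ t := by
    intro t
    rw [← zpow_natCast ζ t, ← zpow_mul, mul_comm, zpow_mul, zpow_natCast]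
  simp_rw [hz]
  by_cases h1 : ζ ^ j = 1
  · rw [if_pos ((hζ.zpow_eq_one_iff_dvd j).mp h1)]
    simp [h1]
  · rw [if_neg (fun hd => h1 ((hζ.zpow_eq_one_iff_dvd j).mpr hd))]
    rw [geom_sum_eq h1]
    have hM1 : (ζ ^ j) ^ M = 1 := by
      rw [← zpow_natCast, ← zpow_mul, mul_comm, zpow_mul, zpow_natCast, hζ.pow_eq_one, one_zpow]
    rw [hM1, sub_self, zero_div]

private lemma uniq_idx {p u ν : ℕ} (hp : p.Prime) (hu : 0 < u) (hpu : ¬ p ∣ u)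
    {M : ℕ} (hM : M = u * (p ^ (ν + 1) - 1)) {q : ℤ} {i j : ℕ}
    (hi : i ≤ ν) (hj : j ≤ ν) (hdi : (M : ℤ) ∣ q - u * p ^ i)
    (hdj : (M : ℤ) ∣ q - u * p ^ j) : i = j := by
  by_contra hne
  wlog hij : i < j generalizing i j
  · exact this hj hi hdj hdi (Ne.symm hne) (by omega)
  have h1 : 1 ≤ p ^ (j - i) := Nat.one_le_pow _ _ hp.pos
  have hd : (M : ℤ) ∣ (u : ℤ) * p ^ i * (p ^ (j - i) - 1) := by
    have he : (u : ℤ) * p ^ i * (p ^ (j - i) - 1) = (q - u * p ^ i) - (q - u * p ^ j) := by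
      have hpj : (p : ℤ) ^ j = p ^ i * p ^ (j - i) := by
        rw [← pow_add]; congr 1; omega
      rw [hpj]; ring
    rw [he]; exact dvd_sub hdi hdj
  have hcast : ((u * p ^ i * (p ^ (j - i) - 1) : ℕ) : ℤ)
      = (u : ℤ) * p ^ i * ((p : ℤ) ^ (j - i) - 1) := by
    push_cast [h1]; ring
  have hdn : M ∣ u * p ^ i * (p ^ (j - i) - 1) := by
    rw [← Int.natCast_dvd_natCast, hcast]; exact hd
  rw [hM, mul_assoc] at hdn
  have hdn2 : (p ^ (ν + 1) - 1) ∣ p ^ i * (p ^ (j - i) - 1) :=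
    (Nat.mul_dvd_mul_iff_left hu).mp hdn
  have hcop : (p ^ (ν + 1) - 1).Coprime p := by
    rw [Nat.coprime_comm]
    rw [hp.coprime_iff_not_dvd]
    intro hdvd
    have h2 : p ∣ p ^ (ν + 1) := dvd_pow_self p (Nat.succ_ne_zero ν)
    have h3 : p ∣ p ^ (ν + 1) - (p ^ (ν + 1) - 1) := Nat.dvd_sub h2 hdvd
    have hP1 : 1 ≤ p ^ (ν + 1) := Nat.one_le_pow _ _ hp.pos
    have : p ^ (ν + 1) - (p ^ (ν + 1) - 1) = 1 := by omega
    rw [this] at h3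
    have h4 := Nat.dvd_one.mp h3
    have h5 := hp.one_lt
    omega
  have hdn3 : (p ^ (ν + 1) - 1) ∣ (p ^ (j - i) - 1) :=
    (Nat.Coprime.dvd_of_dvd_mul_left (hcop.pow_right i) hdn2)
  have hlt : p ^ (j - i) < p ^ (ν + 1) :=
    Nat.pow_lt_pow_right hp.one_lt (by omega)
  have hgt : 2 ≤ p ^ (j - i) := by
    calc 2 ≤ p := hp.two_le
    _ = p ^ 1 := (pow_one p).symm
    _ ≤ p ^ (j - i) := Nat.pow_le_pow_right hp.pos (by omega)
  have := Nat.le_of_dvd (by omega) hdn3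
  omega

/-- The character-sum computation: for `M = u(p^(ν+1)-1)` and any integer `q`,
`∑_{x ∈ μ_M} (-Tr(x^{-u})) x^q` equals `u` if `q ≡ u p^i (mod M)` for some `0 ≤ i ≤ ν`,
and `0` otherwise. -/
theorem stmt4 (k : Type*) [Field k] [IsAlgClosed k] (p : ℕ) [Fact p.Prime] [CharP k p]
    (u ν : ℕ) (hu : 0 < u) (hpu : ¬ p ∣ u) (M : ℕ) (hM : M = u * (p ^ (ν + 1) - 1))
    (q : ℤ) :
    ∑ x ∈ Polynomial.nthRootsFinset M (1 : k),
        (-(∑ i ∈ Finset.range (ν + 1), (x⁻¹ ^ u) ^ (p ^ i))) * x ^ q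
      = if ∃ i ≤ ν, q ≡ (u : ℤ) * (p : ℤ) ^ i [ZMOD (M : ℤ)] then (u : k) else 0 := by
  have hp := Fact.out (p := p.Prime)
  have hP1 : 1 ≤ p ^ (ν + 1) := Nat.one_le_pow _ _ hp.pos
  have hPM : 2 ≤ p ^ (ν + 1) := by
    calc 2 ≤ p := hp.two_le
    _ = p ^ 1 := (pow_one p).symm
    _ ≤ p ^ (ν + 1) := Nat.pow_le_pow_right hp.pos (by omega)
  have hMpos : 0 < M := by rw [hM]; exact Nat.mul_pos hu (by omega)
  have hMk : (M : k) = -(u : k) := by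
    have hpc : (p : k) = 0 := CharP.cast_eq_zero k p
    have : ((M : ℕ) : k) = (u : k) * ((p : k) ^ (ν + 1) - 1) := by
      rw [hM]; push_cast [hP1]; ring
    rw [this, hpc, zero_pow (Nat.succ_ne_zero ν)]; ring
  have huk : (u : k) ≠ 0 := fun h => hpu ((CharP.cast_eq_zero_iff k p u).mp h)
  have hMne : NeZero ((M : ℕ) : k) := ⟨by rw [hMk]; exact neg_ne_zero.mpr huk⟩
  obtain ⟨ζ, hζ⟩ := HasEnoughRootsOfUnity.exists_primitiveRoot k M
  calc
    ∑ x ∈ Polynomial.nthRootsFinset M (1 : k),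
        (-(∑ i ∈ Finset.range (ν + 1), (x⁻¹ ^ u) ^ (p ^ i))) * x ^ q
      = ∑ x ∈ Polynomial.nthRootsFinset M (1 : k), ∑ i ∈ Finset.range (ν + 1),
          -(x ^ (q - (u : ℤ) * (p : ℤ) ^ i)) := by
        refine Finset.sum_congr rfl fun x hx => ?_
        have hx0 : x ≠ 0 := Polynomial.ne_zero_of_mem_nthRootsFinset one_ne_zero hx
        rw [neg_mul, Finset.sum_mul, ← Finset.sum_neg_distrib]
        refine Finset.sum_congr rfl fun i _ => ?_
        congr 1
        rw [← pow_mul, inv_pow, ← zpow_natCast x (u * p ^ i), ← zpow_neg, ← zpow_add₀ hx0]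
        congr 1
        push_cast
        ring
    _ = ∑ i ∈ Finset.range (ν + 1),
          -(if (M : ℤ) ∣ q - (u : ℤ) * (p : ℤ) ^ i then (M : k) else 0) := by
        rw [Finset.sum_comm]
        refine Finset.sum_congr rfl fun i _ => ?_
        rw [Finset.sum_neg_distrib, orth_sum hMpos hζ]
    _ = if ∃ i ≤ ν, q ≡ (u : ℤ) * (p : ℤ) ^ i [ZMOD (M : ℤ)] then (u : k) else 0 := by
        by_cases hex : ∃ i ≤ ν, q ≡ (u : ℤ) * (p : ℤ) ^ i [ZMOD (M : ℤ)]
        · rw [if_pos hex]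
          obtain ⟨i₀, hi₀, hc⟩ := hex
          have hd₀ : (M : ℤ) ∣ q - (u : ℤ) * (p : ℤ) ^ i₀ := hc.symm.dvd
          rw [Finset.sum_eq_single i₀]
          · rw [if_pos hd₀, hMk, neg_neg]
          · intro j hj hne
            rw [if_neg, neg_zero]
            intro hdj
            exact hne (uniq_idx hp hu hpu hM (Finset.mem_range_succ_iff.mp hj) hi₀ hdj hd₀)
          · intro habs
            exact absurd (Finset.mem_range_succ_iff.mpr hi₀) habs
        · rw [if_neg hex]
          refine Finset.sum_eq_zero fun i hi => ?_
          rw [if_neg, neg_zero]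
          intro hd
          exact hex ⟨i, Finset.mem_range_succ_iff.mp hi,
            (Int.ModEq.symm (Int.modEq_iff_dvd.mpr hd))⟩
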